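/- For the binomial mutation kernel M_H(b,c) = ∑ binom(ℓ−b,k) binom(b,l) q^k (1−q)^{ℓ−b−k} (q/(κ−1))^l (1−q/(κ−1))^{b−l} (sum over k,l ≥ 0 with k ≤ ℓ−b, l ≤ b, k−l = c−b), fix j, k ∈ ℕ, and let ℓ → ∞, q → 0 with ℓq → a > 0. Then M_H(j,k) converges to e^{−a} a^{k−j}/(k−j)! if j ≤ k, and to 0 if j > k. -/

import Mathlib

open Finset Filter

/-- The mutation kernel induced on Hamming classes: for sequence length `ℓ`,
    alphabet size `κ` and per-site mutation probability `q`,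
    `MH ℓ κ q b c` is the probability of mutating from class `b` to class `c`. -/
noncomputable def MH (ℓ κ : ℕ) (q : ℝ) (b c : ℕ) : ℝ :=
  ∑ k ∈ Finset.range (ℓ - b + 1), ∑ l ∈ Finset.range (b + 1),
    if (k : ℤ) - (l : ℤ) = (c : ℤ) - (b : ℤ) then
      ((Nat.choose (ℓ - b) k : ℕ) : ℝ) * ((Nat.choose b l : ℕ) : ℝ) *
        q ^ k * (1 - q) ^ (ℓ - b - k) *
        (q / ((κ : ℝ) - 1)) ^ l * (1 - q / ((κ : ℝ) - 1)) ^ (b - l)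
    else 0

/-- Auxiliary term: the contribution of the `l`-th summand after collapsing the
inner sum of `MH`. -/
noncomputable def Tterm (κ j k ℓ : ℕ) (q : ℝ) (l : ℕ) : ℝ :=
  if j ≤ l + k then
    ((ℓ - j).choose (l + k - j) : ℝ) * (j.choose l : ℝ) * q ^ (l + k - j) *
      (1 - q) ^ (ℓ - j - (l + k - j)) * (q / ((κ : ℝ) - 1)) ^ l *
      (1 - q / ((κ : ℝ) - 1)) ^ (j - l)
  else 0

lemma MH_collapse (κ j k ℓ : ℕ) (q : ℝ) (hℓ : j + k ≤ ℓ) :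
    MH ℓ κ q j k = ∑ l ∈ Finset.range (j + 1), Tterm κ j k ℓ q l := by
  unfold MH
  rw [Finset.sum_comm]
  refine Finset.sum_congr rfl fun l hl => ?_
  have hlj : l ≤ j := Nat.lt_succ_iff.mp (Finset.mem_range.mp hl)
  by_cases hjl : j ≤ l + k
  · have hcond : ∀ m : ℕ, (((m : ℤ) - (l : ℤ) = (k : ℤ) - (j : ℤ))) ↔ m = l + k - j := by
      intro m; omega
    have hrw : ∀ m ∈ Finset.range (ℓ - j + 1),
        (if (m : ℤ) - (l : ℤ) = (k : ℤ) - (j : ℤ) then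
          ((ℓ - j).choose m : ℝ) * (j.choose l : ℝ) * q ^ m * (1 - q) ^ (ℓ - j - m) *
            (q / ((κ : ℝ) - 1)) ^ l * (1 - q / ((κ : ℝ) - 1)) ^ (j - l) else 0)
        = (if m = l + k - j then
          ((ℓ - j).choose m : ℝ) * (j.choose l : ℝ) * q ^ m * (1 - q) ^ (ℓ - j - m) *
            (q / ((κ : ℝ) - 1)) ^ l * (1 - q / ((κ : ℝ) - 1)) ^ (j - l) else 0) := by
      intro m _
      exact if_congr (hcond m) rfl rfl
    rw [Finset.sum_congr rfl hrw, Finset.sum_ite_eq']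
    have hmem : l + k - j ∈ Finset.range (ℓ - j + 1) := by
      rw [Finset.mem_range]; omega
    rw [if_pos hmem, Tterm, if_pos hjl]
  · have hrw : ∀ m ∈ Finset.range (ℓ - j + 1),
        (if (m : ℤ) - (l : ℤ) = (k : ℤ) - (j : ℤ) then
          ((ℓ - j).choose m : ℝ) * (j.choose l : ℝ) * q ^ m * (1 - q) ^ (ℓ - j - m) *
            (q / ((κ : ℝ) - 1)) ^ l * (1 - q / ((κ : ℝ) - 1)) ^ (j - l) else 0)
        = (0 : ℝ) := by
      intro m _
      rw [if_neg]; omega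
    rw [Finset.sum_congr rfl hrw, Finset.sum_const, smul_zero, Tterm, if_neg hjl]

section aux

variable (a : ℝ) (L : ℕ → ℕ) (q : ℕ → ℝ)

lemma aux_linear (ha : 0 < a)
    (hL : Tendsto (fun n => (L n : ℝ)) atTop atTop)
    (hq : Tendsto q atTop (nhds 0))
    (hLq : Tendsto (fun n => (L n : ℝ) * q n) atTop (nhds a)) (c : ℕ) :
    Tendsto (fun n => ((L n - c : ℕ) : ℝ) * q n) atTop (nhds a) := by
  have h1 : Tendsto (fun n => (L n : ℝ) * q n - (c : ℝ) * q n) atTop (nhds a) := by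
    have := hLq.sub (hq.const_mul (c : ℝ))
    simpa using this
  apply h1.congr'
  have hev : ∀ᶠ n in atTop, (c : ℝ) ≤ (L n : ℝ) := hL.eventually_ge_atTop _
  filter_upwards [hev] with n hn
  have hcL : c ≤ L n := by exact_mod_cast hn
  rw [Nat.cast_sub hcL]; ring

lemma aux_binom (ha : 0 < a)
    (hL : Tendsto (fun n => (L n : ℝ)) atTop atTop)
    (hq : Tendsto q atTop (nhds 0))
    (hLq : Tendsto (fun n => (L n : ℝ) * q n) atTop (nhds a)) (c m : ℕ) :
    Tendsto (fun n => ((L n - c).choose m : ℝ) * q n ^ m) atTop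
      (nhds (a ^ m / (Nat.factorial m))) := by
  have key : ∀ n, ((L n - c).choose m : ℝ) * q n ^ m
      = (∏ i ∈ Finset.range m, (((L n - (c + i) : ℕ) : ℝ) * q n)) / (Nat.factorial m) := by
    intro n
    have h1 : ((L n - c).descFactorial m : ℝ)
        = (Nat.factorial m : ℝ) * ((L n - c).choose m : ℝ) := by
      exact_mod_cast congrArg (Nat.cast (R := ℝ)) (Nat.descFactorial_eq_factorial_mul_choose _ m)
    have h2 : ((L n - c).descFactorial m : ℝ)
        = ∏ i ∈ Finset.range m, ((L n - (c + i) : ℕ) : ℝ) := by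
      rw [Nat.descFactorial_eq_prod_range]
      push_cast
      refine Finset.prod_congr rfl fun i _ => ?_
      congr 1
      omega
    rw [Finset.prod_mul_distrib, ← h2, h1, Finset.prod_const, Finset.card_range]
    have hm : (Nat.factorial m : ℝ) ≠ 0 := by positivity
    field_simp
  have hprod : Tendsto (fun n => ∏ i ∈ Finset.range m, (((L n - (c + i) : ℕ) : ℝ) * q n))
      atTop (nhds (∏ _i ∈ Finset.range m, a)) :=
    tendsto_finset_prod _ fun i _ => aux_linear a L q ha hL hq hLq (c + i)
  have := hprod.div_const (Nat.factorial m : ℝ)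
  rw [Finset.prod_const, Finset.card_range] at this
  exact Tendsto.congr (fun n => (key n).symm) this

lemma aux_qpos (ha : 0 < a)
    (hq01 : ∀ n, q n ∈ Set.Icc (0 : ℝ) 1)
    (hLq : Tendsto (fun n => (L n : ℝ) * q n) atTop (nhds a)) :
    ∀ᶠ n in atTop, 0 < q n := by
  have h := hLq.eventually_const_lt (show (0 : ℝ) < a from ha)
  filter_upwards [h] with n hn
  rcases lt_or_eq_of_le (hq01 n).1 with h' | h'
  · exact h'
  · exfalso; rw [← h'] at hn; simp at hn

lemma aux_exp (ha : 0 < a)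
    (hq01 : ∀ n, q n ∈ Set.Icc (0 : ℝ) 1)
    (hL : Tendsto (fun n => (L n : ℝ)) atTop atTop)
    (hq : Tendsto q atTop (nhds 0))
    (hLq : Tendsto (fun n => (L n : ℝ) * q n) atTop (nhds a)) (c : ℕ) :
    Tendsto (fun n => (1 - q n) ^ (L n - c)) atTop (nhds (Real.exp (-a))) := by
  have hqpos : ∀ᶠ n in atTop, 0 < q n := aux_qpos a L q ha hq01 hLq
  have hqlt : ∀ᶠ n in atTop, q n < 1 := hq.eventually (gt_mem_nhds (by norm_num))
  -- derivative of log (1 - x) at 0 is -1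
  have hd : HasDerivAt (fun x : ℝ => Real.log (1 - x)) (-1) 0 := by
    have h1 : HasDerivAt (fun x : ℝ => 1 - x) (-1) 0 := by
      exact (hasDerivAt_id (0 : ℝ)).const_sub 1
    have h2 := (Real.hasDerivAt_log (by norm_num : (1 : ℝ) - 0 ≠ 0)).comp 0 h1
    exact h2.congr_deriv (by norm_num)
  have hslope : Tendsto (fun n => Real.log (1 - q n) / q n) atTop (nhds (-1)) := by
    have h2 := hasDerivAt_iff_tendsto_slope.mp hd
    have h3 : Tendsto q atTop (nhdsWithin 0 {(0 : ℝ)}ᶜ) := by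
      rw [tendsto_nhdsWithin_iff]
      exact ⟨hq, hqpos.mono fun n hn => by simpa using ne_of_gt hn⟩
    have h4 := h2.comp h3
    apply h4.congr
    intro n
    simp [Function.comp, slope_def_field]
  have hmain : Tendsto (fun n => ((L n - c : ℕ) : ℝ) * Real.log (1 - q n)) atTop
      (nhds (-a)) := by
    have h5 := (aux_linear a L q ha hL hq hLq c).mul hslope
    rw [show a * (-1 : ℝ) = -a by ring] at h5
    apply h5.congr'
    filter_upwards [hqpos] with n hn
    field_simp
  have h6 : Tendsto (fun n => Real.exp (((L n - c : ℕ) : ℝ) * Real.log (1 - q n))) atTop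
      (nhds (Real.exp (-a))) := (Real.continuous_exp.tendsto _).comp hmain
  apply h6.congr'
  filter_upwards [hqpos, hqlt] with n h1 h2
  have hpos : (0 : ℝ) < 1 - q n := by linarith
  rw [← Real.log_pow, Real.exp_log (pow_pos hpos _)]

end aux

theorem mutation_kernel_limit
    (κ : ℕ) (hκ : 2 ≤ κ) (a : ℝ) (ha : 0 < a) (j k : ℕ)
    (L : ℕ → ℕ) (q : ℕ → ℝ)
    (hq01 : ∀ n, q n ∈ Set.Icc (0 : ℝ) 1)
    (hL : Tendsto (fun n => (L n : ℝ)) atTop atTop)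
    (hq : Tendsto q atTop (nhds 0))
    (hLq : Tendsto (fun n => (L n : ℝ) * q n) atTop (nhds a)) :
    Tendsto (fun n => MH (L n) κ (q n) j k) atTop
      (nhds (if j ≤ k then Real.exp (-a) * a ^ (k - j) / (Nat.factorial (k - j))
             else 0)) := by
  set V : ℕ → ℝ := fun l =>
    if l = 0 ∧ j ≤ k then Real.exp (-a) * a ^ (k - j) / (Nat.factorial (k - j)) else 0
    with hV
  -- per-term limits
  have hterm : ∀ l, Tendsto (fun n => Tterm κ j k (L n) (q n) l) atTop (nhds (V l)) := by
    intro l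
    by_cases hjl : j ≤ l + k
    · simp only [Tterm, if_pos hjl]
      set m := l + k - j with hm
      have hbin := aux_binom a L q ha hL hq hLq j m
      have hexp := aux_exp a L q ha hq01 hL hq hLq (j + m)
      have hpow1 : Tendsto (fun n => (q n / ((κ : ℝ) - 1)) ^ l) atTop
          (nhds (((0 : ℝ) / ((κ : ℝ) - 1)) ^ l)) := (hq.div_const _).pow l
      have hpow2 : Tendsto (fun n => (1 - q n / ((κ : ℝ) - 1)) ^ (j - l)) atTop
          (nhds ((1 - (0 : ℝ) / ((κ : ℝ) - 1)) ^ (j - l))) :=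
        (tendsto_const_nhds.sub (hq.div_const _)).pow (j - l)
      have hall := (((hbin.mul (tendsto_const_nhds (x := (j.choose l : ℝ)))).mul hexp).mul
        hpow1).mul hpow2
      have heq : (fun n => ((L n - j).choose m : ℝ) * (j.choose l : ℝ) * q n ^ m *
            (1 - q n) ^ (L n - j - m) * (q n / ((κ : ℝ) - 1)) ^ l *
            (1 - q n / ((κ : ℝ) - 1)) ^ (j - l))
          = (fun n => ((L n - j).choose m : ℝ) * q n ^ m * (j.choose l : ℝ) *
            (1 - q n) ^ (L n - (j + m)) * (q n / ((κ : ℝ) - 1)) ^ l *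
            (1 - q n / ((κ : ℝ) - 1)) ^ (j - l)) := by
        funext n
        rw [Nat.sub_sub]
        ring
      rw [heq]
      convert hall using 2
      by_cases hl0 : l = 0
      · subst hl0
        have hjk : j ≤ k := by omega
        have hmkj : m = k - j := by omega
        simp [hV, hjk, hmkj]
        ring
      · simp [hV, hl0, zero_div, zero_pow hl0]
    · simp only [Tterm, if_neg hjl]
      have hVl : V l = 0 := if_neg (by rintro ⟨rfl, hjk⟩; omega)
      rw [hVl]
      exact tendsto_const_nhds
  have hsum := tendsto_finset_sum (Finset.range (j + 1)) (fun l _ => hterm l)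
  have hVsum : ∑ l ∈ Finset.range (j + 1), V l
      = (if j ≤ k then Real.exp (-a) * a ^ (k - j) / (Nat.factorial (k - j)) else 0) := by
    rw [Finset.sum_eq_single_of_mem 0 (Finset.mem_range.mpr (Nat.succ_pos j))]
    · simp [hV]
    · intro l _ hl0
      simp [hV, hl0]
  rw [hVsum] at hsum
  apply hsum.congr'
  have hev : ∀ᶠ n in atTop, (j + k : ℝ) ≤ (L n : ℝ) := hL.eventually_ge_atTop _
  filter_upwards [hev] with n hn
  have hjk : j + k ≤ L n := by exact_mod_cast hn
  exact (MH_collapse κ j k (L n) (q n) hjk).symm
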